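/- arXiv:math/0304177 — 8 statements merged into one kernel-verified Lean document; each statement's English description precedes it below -/
import Mathlib

section
/- Let G be a group, let (g_n) be a sequence of pairwise distinct elements of G, and let x ∈ ℓ²(G;ℝ). If the sequence (g_n•x) converges in ℓ²(G;ℝ) to some y, then y = 0. In particular, if x lies on the unit sphere of ℓ²(G;ℝ), then (g_n•x) cannot converge to a point of the unit sphere. -/
/-- If `(g_n)` is a sequence of pairwise distinct elements of a group `G`,
`x ∈ ℓ²(G; ℝ)`, and the sequence `g_n • x` (where `(g • x) h = x (h * g)`) converges to
some `y`, then `y = 0`; in particular if `x` lies on the unit sphere, the limit `y`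
cannot lie on the unit sphere. -/
theorem statement2 (G : Type*) [Group G] (g : ℕ → G) (hg : Function.Injective g)
    (x y : lp (fun _ : G => ℝ) 2) (z : ℕ → lp (fun _ : G => ℝ) 2)
    (hz : ∀ (n : ℕ) (h : G), z n h = x (h * g n))
    (hconv : Filter.Tendsto z Filter.atTop (nhds y)) :
    y = 0 ∧ (‖x‖ = 1 → ‖y‖ ≠ 1) := by
  -- x tends to 0 along the cofinite filter
  have hx2 : Summable fun k : G => ‖x k‖ ^ ((2 : ENNReal).toReal) :=
    (lp.memℓp x).summable (by norm_num)
  have hx2' : Summable fun k : G => ‖x k‖ ^ (2 : ℕ) := by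
    have : ((2 : ENNReal).toReal) = ((2 : ℕ) : ℝ) := by norm_num
    simpa [this, Real.rpow_natCast] using hx2
  have hx0 : Filter.Tendsto (fun k : G => x k) Filter.cofinite (nhds 0) := by
    rw [tendsto_zero_iff_norm_tendsto_zero]
    have hsq := hx2'.tendsto_cofinite_zero
    have := hsq.sqrt
    simpa [Real.sqrt_sq_eq_abs, Real.norm_eq_abs] using this
  have hy : y = 0 := by
    ext h
    have hkinj : Function.Injective fun n : ℕ => h * g n := fun a b hab =>
      hg (mul_left_cancel hab)
    have hco : Filter.Tendsto (fun n : ℕ => h * g n) Filter.atTop Filter.cofinite := by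
      rw [← Nat.cofinite_eq_atTop]
      exact hkinj.tendsto_cofinite
    have h1 : Filter.Tendsto (fun n => x (h * g n)) Filter.atTop (nhds 0) :=
      hx0.comp hco
    have hnorm : Filter.Tendsto (fun n => ‖z n - y‖) Filter.atTop (nhds 0) := by
      have := (tendsto_sub_nhds_zero_iff.2 hconv).norm
      simpa using this
    have h2 : Filter.Tendsto (fun n => (z n) h - y h) Filter.atTop (nhds 0) := by
      rw [tendsto_zero_iff_norm_tendsto_zero]
      refine squeeze_zero (fun n => norm_nonneg _) (fun n => ?_) hnorm
      have := lp.norm_apply_le_norm (by norm_num : (2 : ENNReal) ≠ 0) (z n - y) h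
      simpa using this
    have h3 : Filter.Tendsto (fun n => (z n) h) Filter.atTop (nhds (y h)) := by
      have := h2.add_const (y h)
      simpa using this
    have h4 : Filter.Tendsto (fun n => (z n) h) Filter.atTop (nhds 0) := by
      refine h1.congr fun n => (hz n h).symm
    have : y h = 0 := tendsto_nhds_unique h3 h4
    simpa using this
  refine ⟨hy, fun _ => ?_⟩
  rw [hy]
  simp
end

section
/- Let G be a group with no nonidentity element of finite order (torsion-free). Then the right-translation action of G on the unit sphere S of ℓ²(G;ℝ) is free and properly discontinuous. -/
noncomputable section

namespace Statement3Proof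

open Set
open scoped ENNReal Pointwise

variable {G : Type*} [Group G]

private lemma two_toReal_pos : (0:ℝ) < (2:ℝ≥0∞).toReal := by norm_num

private lemma memT (x : lp (fun _ : G => ℝ) 2) (g : G) :
    Memℓp (fun h => x (h * g)) (2:ℝ≥0∞) := by
  apply memℓp_gen
  exact ((Equiv.mulRight g).summable_iff
    (f := fun i => ‖x i‖ ^ (2:ℝ≥0∞).toReal)).2 ((lp.memℓp x).summable two_toReal_pos)

def T (g : G) (x : lp (fun _ : G => ℝ) 2) : lp (fun _ : G => ℝ) 2 :=
  ⟨fun h => x (h * g), memT x g⟩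

@[simp] lemma T_apply (g : G) (x : lp (fun _ : G => ℝ) 2) (h : G) :
    (T g x) h = x (h * g) := rfl

lemma summable_sq (x : lp (fun _ : G => ℝ) 2) : Summable (fun h => (x h) ^ 2) := by
  have := (lp.memℓp x).summable two_toReal_pos
  simp only [show ((2:ℝ≥0∞)).toReal = ((2:ℕ):ℝ) by norm_num, Real.rpow_natCast,
    Real.norm_eq_abs, sq_abs] at this
  exact this

lemma norm_sq_eq (x : lp (fun _ : G => ℝ) 2) : ‖x‖ ^ 2 = ∑' h, (x h) ^ 2 := by
  have := lp.norm_rpow_eq_tsum (p := 2) two_toReal_pos x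
  simp only [show ((2:ℝ≥0∞)).toReal = ((2:ℕ):ℝ) by norm_num, Real.rpow_natCast,
    Real.norm_eq_abs, sq_abs] at this
  exact this

lemma tsum_T_sq (g : G) (x : lp (fun _ : G => ℝ) 2) :
    ∑' h, (x (h * g)) ^ 2 = ∑' h, (x h) ^ 2 :=
  Equiv.tsum_eq (Equiv.mulRight g) (fun k => (x k) ^ 2)

lemma norm_T (g : G) (x : lp (fun _ : G => ℝ) 2) : ‖T g x‖ = ‖x‖ := by
  have h1 : ‖T g x‖ ^ 2 = ‖x‖ ^ 2 := by
    rw [norm_sq_eq, norm_sq_eq]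
    exact tsum_T_sq g x
  have := norm_nonneg (T g x)
  have := norm_nonneg x
  nlinarith

lemma T_one (x : lp (fun _ : G => ℝ) 2) : T (1:G) x = x := by
  apply lp.ext
  funext h
  simp [T]

lemma T_mul (g₁ g₂ : G) (x : lp (fun _ : G => ℝ) 2) :
    T (g₁ * g₂) x = T g₁ (T g₂ x) := by
  apply lp.ext
  funext h
  simp [T, mul_assoc]

lemma T_sub (g : G) (x y : lp (fun _ : G => ℝ) 2) : T g (x - y) = T g x - T g y := by
  apply lp.ext
  funext h
  simp [T, lp.coeFn_sub, Pi.sub_apply]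
  rfl

/-- freeness -/
lemma T_free (g : G) (hg : ¬ IsOfFinOrder g) (x : lp (fun _ : G => ℝ) 2)
    (hx : T g x = x) : x = 0 := by
  have hfix : ∀ h : G, x (h * g) = x h := by
    intro h
    conv_rhs => rw [← hx]
    rfl
  have key : ∀ (h : G) (n : ℤ), x (h * g ^ n) = x h := by
    intro h n
    induction n using Int.induction_on with
    | zero => simp
    | succ n ih =>
      have e : g ^ ((n : ℤ) + 1) = g ^ (n : ℤ) * g := zpow_add_one g n
      rw [e, ← mul_assoc, hfix]
      exact ih
    | pred n ih =>
      have e : g ^ (-(n : ℤ)) = g ^ (-(n : ℤ) - 1) * g := by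
        rw [← zpow_add_one]; norm_num
      have h2 := hfix (h * g ^ (-(n : ℤ) - 1))
      rw [mul_assoc, ← e] at h2
      rw [← h2]
      exact ih
  have hzero : ∀ h : G, x h = 0 := by
    intro h
    have hinj : Function.Injective (fun n : ℤ => h * g ^ n) := by
      intro a b hab
      exact injective_zpow_iff_not_isOfFinOrder.2 hg (mul_left_cancel hab)
    have hs : Summable ((fun k => (x k) ^ 2) ∘ (fun n : ℤ => h * g ^ n)) :=
      (summable_sq x).comp_injective hinj
    have hconst : ((fun k => (x k) ^ 2) ∘ (fun n : ℤ => h * g ^ n)) =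
        fun _ : ℤ => (x h) ^ 2 := by
      funext n
      simp [Function.comp, key h n]
    rw [hconst, summable_const_iff] at hs
    exact pow_eq_zero_iff (n := 2) (by norm_num) |>.1 hs
  apply lp.ext
  funext h
  simpa using hzero h

/-- tails of a summable nonneg function are small -/
lemma tail_small {f : G → ℝ} (hf : Summable f) {ε : ℝ} (hε : 0 < ε) :
    ∃ F : Finset G, ∑' h, ((↑F : Set G)ᶜ).indicator f h < ε := by
  obtain ⟨s, hs⟩ := hf.tsum_vanishing (Iio_mem_nhds hε)
  refine ⟨s, ?_⟩
  have := hs ((↑s : Set G)ᶜ) disjoint_compl_left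
  rw [tsum_subtype] at this
  exact Set.mem_Iio.1 this

/-- key separation estimate -/
lemma sep (x y : lp (fun _ : G => ℝ) 2) (hx : ‖x‖ = 1) (hy : ‖y‖ = 1) :
    ∃ S : Set G, S.Finite ∧ ∀ g ∉ S, 1 ≤ ‖T g x - y‖ := by
  obtain ⟨F, hF⟩ := tail_small (summable_sq x) (show (0:ℝ) < 1/16 by norm_num)
  obtain ⟨K, hK⟩ := tail_small (summable_sq y) (show (0:ℝ) < 1/16 by norm_num)
  refine ⟨(↑K : Set G)⁻¹ * (↑F : Set G), (K.finite_toSet.inv).mul F.finite_toSet, ?_⟩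
  intro g hg
  -- for h ∈ K, h * g ∉ F
  have hKF : ∀ h : G, h ∈ K → (h * g) ∉ F := by
    intro h hh hcontra
    exact hg ⟨h⁻¹, Set.inv_mem_inv.2 hh, h * g, hcontra, by group⟩
  set u : G → ℝ := fun h => x (h * g) with hu
  set v : G → ℝ := fun h => y h with hv
  have su : Summable (fun h => u h ^ 2) :=
    ((Equiv.mulRight g).summable_iff (f := fun k => (x k)^2)).2 (summable_sq x)
  have sv : Summable (fun h => v h ^ 2) := summable_sq y
  have suv : Summable (fun h => |u h * v h|) := by
    apply Summable.of_nonneg_of_le (fun h => abs_nonneg _)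
      (fun h => ?_) ((su.add sv).mul_left (1/2 : ℝ))
    rw [abs_mul]
    have h1 := sq_nonneg (|u h| - |v h|)
    have h2 : |u h| ^ 2 = u h ^ 2 := sq_abs _
    have h3 : |v h| ^ 2 = v h ^ 2 := sq_abs _
    nlinarith
  -- indicator summands
  have sIx : Summable (fun h => ((↑F : Set G)ᶜ).indicator (fun k => (x k)^2) (h * g)) :=
    ((Equiv.mulRight g).summable_iff
      (f := fun k => ((↑F : Set G)ᶜ).indicator (fun k => (x k)^2) k)).2
      ((summable_sq x).indicator _)
  have sIy : Summable (fun h => ((↑K : Set G)ᶜ).indicator (fun k => (y k)^2) h) :=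
    (summable_sq y).indicator _
  set B : G → ℝ := fun h =>
    2 * ((↑F : Set G)ᶜ).indicator (fun k => (x k)^2) (h * g) + (1/8) * v h ^ 2
      + (1/8) * u h ^ 2 + 2 * ((↑K : Set G)ᶜ).indicator (fun k => (y k)^2) h with hB
  have hBsummable : Summable B :=
    (((sIx.mul_left 2).add (sv.mul_left (1/8))).add (su.mul_left (1/8))).add
      (sIy.mul_left 2)
  have hpoint : ∀ h, |u h * v h| ≤ B h := by
    intro h
    have hIx : 0 ≤ ((↑F : Set G)ᶜ).indicator (fun k => (x k)^2) (h * g) :=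
      Set.indicator_nonneg (fun k _ => sq_nonneg _) _
    have hIy : 0 ≤ ((↑K : Set G)ᶜ).indicator (fun k => (y k)^2) h :=
      Set.indicator_nonneg (fun k _ => sq_nonneg _) _
    simp only [hB]
    rw [abs_mul]
    by_cases hh : h ∈ K
    · have hmem : (h * g) ∈ ((↑F : Set G)ᶜ) := by
        simp only [Set.mem_compl_iff, Finset.mem_coe]
        exact hKF h hh
      rw [Set.indicator_of_mem hmem]
      have h2 : |u h| ^ 2 = u h ^ 2 := sq_abs _
      have h3 : |v h| ^ 2 = v h ^ 2 := sq_abs _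
      have h4 : u h ^ 2 = (x (h * g)) ^ 2 := rfl
      nlinarith [sq_nonneg (4 * |u h| - |v h|), abs_nonneg (u h), abs_nonneg (v h)]
    · have hmem : h ∈ ((↑K : Set G)ᶜ) := by
        simp only [Set.mem_compl_iff, Finset.mem_coe]
        exact hh
      rw [Set.indicator_of_mem hmem]
      have h2 : |u h| ^ 2 = u h ^ 2 := sq_abs _
      have h3 : |v h| ^ 2 = v h ^ 2 := sq_abs _
      have h4 : v h ^ 2 = (y h) ^ 2 := rfl
      nlinarith [sq_nonneg (|u h| - 4 * |v h|), abs_nonneg (u h), abs_nonneg (v h)]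
  have hsum_u : ∑' h, u h ^ 2 = 1 := by
    rw [hu]
    rw [show (∑' h, (x (h * g)) ^ 2) = ∑' h, (x h)^2 from tsum_T_sq g x,
      ← norm_sq_eq, hx]; norm_num
  have hsum_v : ∑' h, v h ^ 2 = 1 := by
    rw [hv, ← norm_sq_eq, hy]; norm_num
  have hsum_Ix : ∑' h, ((↑F : Set G)ᶜ).indicator (fun k => (x k)^2) (h * g) < 1/16 := by
    have e1 : (∑' h : G, ((↑F : Set G)ᶜ).indicator (fun k => (x k)^2) (h * g))
        = ∑' k, ((↑F : Set G)ᶜ).indicator (fun k => (x k)^2) k :=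
      Equiv.tsum_eq (Equiv.mulRight g) (fun k => ((↑F : Set G)ᶜ).indicator (fun k => (x k)^2) k)
    rw [e1]
    exact hF
  have hBsum : ∑' h, B h < 1/2 := by
    simp only [hB]
    rw [Summable.tsum_add (((sIx.mul_left 2).add (sv.mul_left (1/8))).add (su.mul_left (1/8)))
        (sIy.mul_left 2),
      Summable.tsum_add ((sIx.mul_left 2).add (sv.mul_left (1/8))) (su.mul_left (1/8)),
      Summable.tsum_add (sIx.mul_left 2) (sv.mul_left (1/8)),
      tsum_mul_left, tsum_mul_left, tsum_mul_left, tsum_mul_left,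
      hsum_u, hsum_v]
    nlinarith [hsum_Ix, hK]
  have habs : ∑' h, |u h * v h| < 1/2 :=
    lt_of_le_of_lt (Summable.tsum_le_tsum hpoint suv hBsummable) hBsum
  -- now lower bound the norm
  have hnormsq : ‖T g x - y‖ ^ 2 = ∑' h, (u h - v h) ^ 2 := by
    rw [norm_sq_eq]
    apply tsum_congr
    intro h
    rw [lp.coeFn_sub, Pi.sub_apply]
    rfl
  have hlow : ∀ h, u h ^ 2 + v h ^ 2 - 2 * |u h * v h| ≤ (u h - v h) ^ 2 := by
    intro h
    have : u h * v h ≤ |u h * v h| := le_abs_self _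
    nlinarith
  have hS : Summable (fun h => u h ^ 2 + v h ^ 2 - 2 * |u h * v h|) :=
    (su.add sv).sub (suv.mul_left 2)
  have hS2 : Summable (fun h => (u h - v h) ^ 2) := by
    have := summable_sq (T g x - y)
    refine this.congr fun h => ?_
    rw [lp.coeFn_sub, Pi.sub_apply]
    rfl
  have h1 : (1:ℝ) ≤ ∑' h, (u h - v h) ^ 2 := by
    have hle := Summable.tsum_le_tsum hlow hS hS2
    rw [Summable.tsum_sub (su.add sv) (suv.mul_left 2), Summable.tsum_add su sv, tsum_mul_left,
      hsum_u, hsum_v] at hle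
    linarith
  rw [← hnormsq] at h1
  nlinarith [norm_nonneg (T g x - y)]

/-- positive lower bound on a finset -/
lemma finset_lb {α : Type*} (s : Finset α) (f : α → ℝ) (h : ∀ a ∈ s, 0 < f a) :
    ∃ r : ℝ, 0 < r ∧ ∀ a ∈ s, r ≤ f a := by
  classical
  induction s using Finset.induction_on with
  | empty => exact ⟨1, one_pos, by simp⟩
  | @insert a s ha ih =>
    obtain ⟨r, hr, hrs⟩ := ih (fun b hb => h b (Finset.mem_insert_of_mem hb))
    refine ⟨min r (f a), lt_min hr (h a (Finset.mem_insert_self a s)), ?_⟩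
    intro b hb
    rcases Finset.mem_insert.1 hb with rfl | hb
    · exact min_le_right _ _
    · exact le_trans (min_le_left _ _) (hrs b hb)

/-- uniform separation -/
lemma sep' (x y : lp (fun _ : G => ℝ) 2) (hx : ‖x‖ = 1) (hy : ‖y‖ = 1)
    (E : Set G) (hne : ∀ g ∉ E, T g x ≠ y) :
    ∃ r : ℝ, 0 < r ∧ ∀ g ∉ E, r ≤ ‖T g x - y‖ := by
  classical
  obtain ⟨S, hSfin, hS⟩ := sep x y hx hy
  obtain ⟨r, hr, hrS⟩ := finset_lb (hSfin.diff (t := E)).toFinset (fun g => ‖T g x - y‖)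
    (by
      intro g hgmem
      rw [Set.Finite.mem_toFinset] at hgmem
      have : T g x ≠ y := hne g hgmem.2
      have : T g x - y ≠ 0 := sub_ne_zero.2 this
      simpa [norm_pos_iff] using this)
  refine ⟨min r 1, lt_min hr one_pos, ?_⟩
  intro g hgE
  by_cases hgS : g ∈ S
  · exact le_trans (min_le_left _ _)
      (hrS g (by rw [Set.Finite.mem_toFinset]; exact ⟨hgS, hgE⟩))
  · exact le_trans (min_le_right _ _) (hS g hgS)


def A (g : G) (p : Metric.sphere (0 : lp (fun _ : G => ℝ) 2) 1) :
    Metric.sphere (0 : lp (fun _ : G => ℝ) 2) 1 :=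
  ⟨T g ↑p, by
    rw [mem_sphere_zero_iff_norm, norm_T]
    exact mem_sphere_zero_iff_norm.1 p.2⟩

@[simp] lemma A_coe (g : G) (p : Metric.sphere (0 : lp (fun _ : G => ℝ) 2) 1) :
    (A g p : lp (fun _ : G => ℝ) 2) = T g ↑p := rfl

lemma norm_coe (p : Metric.sphere (0 : lp (fun _ : G => ℝ) 2) 1) :
    ‖(p : lp (fun _ : G => ℝ) 2)‖ = 1 :=
  mem_sphere_zero_iff_norm.1 p.2

lemma A_one (p : Metric.sphere (0 : lp (fun _ : G => ℝ) 2) 1) : A (1 : G) p = p :=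
  Subtype.ext (T_one _)

lemma A_mul (g₁ g₂ : G) (p : Metric.sphere (0 : lp (fun _ : G => ℝ) 2) 1) :
    A (g₁ * g₂) p = A g₁ (A g₂ p) :=
  Subtype.ext (T_mul _ _ _)

lemma A_free (hG : ∀ g : G, g ≠ 1 → ¬ IsOfFinOrder g) (g : G)
    (p : Metric.sphere (0 : lp (fun _ : G => ℝ) 2) 1) (h : A g p = p) : g = 1 := by
  by_contra hg1
  have h0 := T_free g (hG g hg1) ↑p (congrArg Subtype.val h)
  have hn := norm_coe p
  rw [h0] at hn
  simp at hn

lemma dist_A (g : G) (p q : Metric.sphere (0 : lp (fun _ : G => ℝ) 2) 1) :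
    dist (A g p) (A g q) = dist p q := by
  rw [Subtype.dist_eq, Subtype.dist_eq, A_coe, A_coe, dist_eq_norm, dist_eq_norm,
    ← T_sub, norm_T]

lemma dist_A_eq (g : G) (p q : Metric.sphere (0 : lp (fun _ : G => ℝ) 2) 1) :
    dist (A g p) q = ‖T g (↑p : lp (fun _ : G => ℝ) 2) - ↑q‖ := by
  rw [Subtype.dist_eq, A_coe, dist_eq_norm]

/-- the basic disjointness argument -/
lemma ball_disj {g : G} {p q : Metric.sphere (0 : lp (fun _ : G => ℝ) 2) 1} {r : ℝ}
    (hge : r ≤ ‖T g (↑p : lp (fun _ : G => ℝ) 2) - ↑q‖) :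
    (A g '' Metric.ball p (r/2)) ∩ Metric.ball q (r/2) = ∅ := by
  rw [Set.eq_empty_iff_forall_notMem]
  rintro z ⟨⟨w, hw, rfl⟩, hz⟩
  rw [Metric.mem_ball] at hw hz
  have h2 : dist (A g p) q ≤ dist (A g p) (A g w) + dist (A g w) q := dist_triangle _ _ _
  rw [dist_A] at h2
  rw [← dist_A_eq] at hge
  have h4 : dist p w < r/2 := by rwa [dist_comm]
  linarith

lemma sep_pack (p q : Metric.sphere (0 : lp (fun _ : G => ℝ) 2) 1) (E : Set G)
    (hne : ∀ g ∉ E, A g p ≠ q) :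
    ∃ r : ℝ, 0 < r ∧ ∀ g ∉ E, r ≤ ‖T g (↑p : lp (fun _ : G => ℝ) 2) - ↑q‖ := by
  apply sep' (↑p) (↑q) (norm_coe p) (norm_coe q) E
  intro g hg hcontra
  exact hne g hg (Subtype.ext hcontra)

end Statement3Proof

end

/-- An action (given as a family of maps `a g : X → X`) of a group `G` on a topological
space `X` is properly discontinuous if:
(1) points in different orbits can be separated by open sets `U`, `V` with
    `a g '' U ∩ V = ∅` for all `g`;
(2) every stabilizer is finite;
(3) every point has an open neighborhood `U`, stable under its stabilizer, with
    `a g '' U ∩ U = ∅` for every `g` outside the stabilizer. -/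
def IsProperlyDiscontinuousAction {G X : Type*} [TopologicalSpace X]
    (a : G → X → X) : Prop :=
  (∀ x y : X, (∀ g : G, a g x ≠ y) →
    ∃ U V : Set X, IsOpen U ∧ IsOpen V ∧ x ∈ U ∧ y ∈ V ∧
      ∀ g : G, (a g '' U) ∩ V = ∅) ∧
  (∀ x : X, {g : G | a g x = x}.Finite) ∧
  (∀ x : X, ∃ U : Set X, IsOpen U ∧ x ∈ U ∧
    (∀ g : G, a g x = x → a g '' U ⊆ U) ∧
    ∀ g : G, a g x ≠ x → (a g '' U) ∩ U = ∅)

/-- If `G` is torsion-free, the right-translation action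
`(g • x) h = x (h * g)` of `G` on the unit sphere of `ℓ²(G; ℝ)` is free and
properly discontinuous. -/
theorem statement3 (G : Type*) [Group G] (hG : ∀ g : G, g ≠ 1 → ¬ IsOfFinOrder g) :
    ∃ a : G → Metric.sphere (0 : lp (fun _ : G => ℝ) 2) 1 →
          Metric.sphere (0 : lp (fun _ : G => ℝ) 2) 1,
      (∀ (g : G) (p : Metric.sphere (0 : lp (fun _ : G => ℝ) 2) 1) (h : G),
          (a g p : lp (fun _ : G => ℝ) 2) h = (p : lp (fun _ : G => ℝ) 2) (h * g)) ∧
      (∀ p, a 1 p = p) ∧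
      (∀ (g₁ g₂ : G) (p), a (g₁ * g₂) p = a g₁ (a g₂ p)) ∧
      (∀ (g : G) (p), a g p = p → g = 1) ∧
      IsProperlyDiscontinuousAction a := by
  classical
  refine ⟨Statement3Proof.A, fun g p h => rfl, Statement3Proof.A_one,
    Statement3Proof.A_mul, Statement3Proof.A_free hG, ?_, ?_, ?_⟩
  · -- separation of orbits
    intro p q hpq
    obtain ⟨r, hr, hrb⟩ := Statement3Proof.sep_pack p q ∅ (fun g _ => hpq g)
    refine ⟨Metric.ball p (r/2), Metric.ball q (r/2), Metric.isOpen_ball,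
      Metric.isOpen_ball, Metric.mem_ball_self (by linarith),
      Metric.mem_ball_self (by linarith), fun g =>
      Statement3Proof.ball_disj (hrb g (Set.notMem_empty g))⟩
  · -- finite stabilizers
    intro p
    refine Set.Finite.subset (Set.finite_singleton 1) ?_
    intro g hgmem
    exact Statement3Proof.A_free hG g p hgmem
  · -- wandering neighborhoods
    intro p
    have hne : ∀ g ∉ ({1} : Set G), Statement3Proof.A g p ≠ p := by
      intro g hg hcontra
      exact hg (Statement3Proof.A_free hG g p hcontra)
    obtain ⟨r, hr, hrb⟩ := Statement3Proof.sep_pack p p {1} hne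
    refine ⟨Metric.ball p (r/2), Metric.isOpen_ball,
      Metric.mem_ball_self (by linarith), ?_, ?_⟩
    · intro g hgfix
      have hg1 : g = 1 := Statement3Proof.A_free hG g p hgfix
      subst hg1
      rintro z ⟨w, hw, rfl⟩
      rw [Statement3Proof.A_one]
      exact hw
    · intro g hgne
      have hg1 : g ∉ ({1} : Set G) := by
        intro hmem
        rw [Set.mem_singleton_iff] at hmem
        subst hmem
        exact hgne (Statement3Proof.A_one p)
      exact Statement3Proof.ball_disj (hrb g hg1)
end

section
/- Let G be a finite subgroup of the orthogonal group O(n) of ℝⁿ such that every g ∈ G with g ≠ I has no fixed vector in ℝⁿ other than 0. Then there exists an injective group homomorphism ρ from G into the group of surjective linear isometries of the real Hilbert space ℓ² = ℓ²(ℕ;ℝ) such that for every g ≠ I the operator ρ(g) has no fixed vector other than 0; consequently the induced action of G on the unit sphere of ℓ² is free, isometric and properly discontinuous. -/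
open scoped ENNReal
noncomputable section

-- === lp single helpers ===
theorem lp_single_zero' {α : Type*} [DecidableEq α] {E : α → Type*}
    [∀ i, NormedAddCommGroup (E i)] (p : ℝ≥0∞) (i : α) :
    lp.single p i (0 : E i) = 0 := by
  apply lp.ext
  funext j
  by_cases h : j = i
  · subst h; simp [lp.single_apply_self]
  · simp [lp.single_apply_ne p i _ h]

theorem lp_single_add' {α : Type*} [DecidableEq α] {E : α → Type*}
    [∀ i, NormedAddCommGroup (E i)] (p : ℝ≥0∞) (i : α) (x y : E i) :
    lp.single p i (x + y) = lp.single p i x + lp.single p i y := by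
  apply lp.ext
  funext j
  by_cases h : j = i
  · subst h
    simp [lp.single_apply_self, lp.coeFn_add]
  · simp [lp.single_apply_ne p i _ h, lp.coeFn_add]

theorem lp_single_sum {α : Type*} [DecidableEq α] {E : α → Type*}
    [∀ i, NormedAddCommGroup (E i)] (p : ℝ≥0∞) (i : α) {β : Type*} (s : Finset β)
    (x : β → E i) :
    lp.single p i (∑ b ∈ s, x b) = ∑ b ∈ s, lp.single p i (x b) := by
  classical
  induction s using Finset.induction_on with
  | empty => simp [lp_single_zero']
  | insert a s h ih =>
      rw [Finset.sum_insert h, Finset.sum_insert h, lp_single_add', ih]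

-- === diagonal isometry ===
theorem memℓp_comp_isometry {ι E : Type*} [NormedAddCommGroup E] [NormedSpace ℝ E]
    (g : E ≃ₗᵢ[ℝ] E) (f : lp (fun _ : ι => E) 2) :
    Memℓp (fun k => g (f k)) 2 := by
  have h := lp.memℓp f
  rw [memℓp_gen_iff (p := 2) (by norm_num)] at h ⊢
  simpa using h

noncomputable def lpDiag {ι E : Type*} [NormedAddCommGroup E] [NormedSpace ℝ E]
    (g : E ≃ₗᵢ[ℝ] E) : lp (fun _ : ι => E) 2 ≃ₗᵢ[ℝ] lp (fun _ : ι => E) 2 where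
  toFun f := ⟨fun k => g (f k), memℓp_comp_isometry g f⟩
  invFun f := ⟨fun k => g.symm (f k), memℓp_comp_isometry g.symm f⟩
  map_add' f h := by
    apply lp.ext
    funext k
    simp [lp.coeFn_add]
    rfl
  map_smul' c f := by
    apply lp.ext
    funext k
    simp [lp.coeFn_smul]
  left_inv f := by
    apply lp.ext
    funext k
    simp
  right_inv f := by
    apply lp.ext
    funext k
    simp
  norm_map' f := by
    rw [lp.norm_eq_tsum_rpow (by norm_num), lp.norm_eq_tsum_rpow (by norm_num)]
    congr 1
    apply tsum_congr
    intro k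
    have : ‖g (f k)‖ = ‖f k‖ := g.norm_map _
    exact congrArg (· ^ (2:ℝ≥0∞).toReal) this

theorem lpDiag_apply {ι E : Type*} [NormedAddCommGroup E] [NormedSpace ℝ E]
    (g : E ≃ₗᵢ[ℝ] E) (f : lp (fun _ : ι => E) 2) (k : ι) :
    (lpDiag g f : ∀ _ : ι, E) k = g (f k) := rfl

-- === hilbert basis ===
section basis
variable (n : ℕ)

def vfam : ℕ × Fin n → lp (fun _ : ℕ => EuclideanSpace ℝ (Fin n)) 2 :=
  fun q => lp.single 2 q.1 (EuclideanSpace.single q.2 (1:ℝ))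

theorem vfam_orthonormal : Orthonormal ℝ (vfam n) := by
  classical
  rw [orthonormal_iff_ite]
  rintro ⟨k, i⟩ ⟨k', i'⟩
  rw [vfam, vfam, lp.inner_single_left]
  rcases eq_or_ne k k' with rfl | hk
  · rw [lp.single_apply_self, EuclideanSpace.inner_single_left]
    simp [EuclideanSpace.single_apply, Prod.ext_iff, eq_comm]
  · rw [lp.single_apply_ne _ _ _ hk]
    simp [Prod.ext_iff, hk]

theorem vfam_dense :
    ⊤ ≤ (Submodule.span ℝ (Set.range (vfam n))).topologicalClosure := by
  classical
  intro f _
  have hf := lp.hasSum_single (by norm_num : (2:ℝ≥0∞) ≠ ⊤) f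
  refine mem_closure_of_tendsto hf (Filter.Eventually.of_forall ?_)
  intro s
  rw [SetLike.mem_coe]
  refine Submodule.sum_mem _ ?_
  intro k _
  have hsum : lp.single (E := fun _ : ℕ => EuclideanSpace ℝ (Fin n)) (2:ℝ≥0∞) k (f k)
      = ∑ i, (f k) i • lp.single 2 k (EuclideanSpace.single i (1:ℝ)) := by
    calc lp.single (E := fun _ : ℕ => EuclideanSpace ℝ (Fin n)) (2:ℝ≥0∞) k (f k)
        = lp.single 2 k (∑ i, (f k) i • EuclideanSpace.single i (1:ℝ)) := by
          congr 1
          conv_lhs => rw [← (EuclideanSpace.basisFun (Fin n) ℝ).sum_repr (f k)]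
          simp [EuclideanSpace.basisFun_apply, EuclideanSpace.basisFun_repr]
      _ = ∑ i, (f k) i • lp.single 2 k (EuclideanSpace.single i (1:ℝ)) := by
          rw [lp_single_sum]
          simp only [lp.single_smul]
  rw [hsum]
  exact Submodule.sum_mem _ fun i _ =>
    Submodule.smul_mem _ _ (Submodule.subset_span ⟨(k, i), rfl⟩)

def myBasis (e : ℕ ≃ ℕ × Fin n) :
    HilbertBasis ℕ ℝ (lp (fun _ : ℕ => EuclideanSpace ℝ (Fin n)) 2) :=
  HilbertBasis.mk ((vfam_orthonormal n).comp e e.injective)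
    (by
      rw [Set.range_comp, e.surjective.range_eq, Set.image_univ]
      exact vfam_dense n)


end basis
end


theorem pd_of_isometric {G X : Type*} [Finite G] [Nonempty G] [MetricSpace X]
    (a : G → X → X) (hiso : ∀ g : G, Isometry (a g)) :
    IsProperlyDiscontinuousAction a := by
  refine ⟨?_, fun x => Set.toFinite _, ?_⟩
  · intro x y hxy
    obtain ⟨g0, hg0⟩ := Finite.exists_min (fun g : G => dist (a g x) y)
    have hdpos : 0 < dist (a g0 x) y := dist_pos.2 (hxy g0)
    set d := dist (a g0 x) y with hd
    refine ⟨Metric.ball x (d/2), Metric.ball y (d/2), Metric.isOpen_ball,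
      Metric.isOpen_ball, Metric.mem_ball_self (by positivity),
      Metric.mem_ball_self (by positivity), ?_⟩
    intro g
    ext z
    simp only [Set.mem_inter_iff, Set.mem_image, Set.mem_empty_iff_false, iff_false, not_and]
    rintro ⟨u, hu, rfl⟩ hz
    have hcon : dist (a g x) y < d := by
      calc dist (a g x) y ≤ dist (a g x) (a g u) + dist (a g u) y := dist_triangle _ _ _
        _ < d/2 + d/2 := by
            refine add_lt_add ?_ hz
            rw [(hiso g).dist_eq, dist_comm]
            exact hu
        _ = d := by ring
    exact absurd hcon (not_lt.2 (hg0 g))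
  · intro x
    by_cases hx : ∀ g : G, a g x = x
    · exact ⟨Set.univ, isOpen_univ, trivial, fun g _ => by simp,
        fun g hg => absurd (hx g) hg⟩
    · push_neg at hx
      haveI : Nonempty {g : G // a g x ≠ x} := ⟨⟨hx.choose, hx.choose_spec⟩⟩
      obtain ⟨g0, hg0⟩ := Finite.exists_min (fun g : {g : G // a g x ≠ x} => dist (a g.1 x) x)
      have hdpos : 0 < dist (a g0.1 x) x := dist_pos.2 g0.2
      set d := dist (a g0.1 x) x with hd
      refine ⟨Metric.ball x (d/2), Metric.isOpen_ball, Metric.mem_ball_self (by positivity),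
        ?_, ?_⟩
      · rintro g hg z ⟨u, hu, rfl⟩
        have : dist (a g u) x < d/2 := by
          calc dist (a g u) x = dist (a g u) (a g x) := by rw [hg]
            _ = dist u x := (hiso g).dist_eq u x
            _ < d/2 := hu
        exact this
      · intro g hgne
        ext z
        simp only [Set.mem_inter_iff, Set.mem_image, Set.mem_empty_iff_false, iff_false, not_and]
        rintro ⟨u, hu, rfl⟩ hz
        have hcon : dist (a g x) x < d := by
          calc dist (a g x) x ≤ dist (a g x) (a g u) + dist (a g u) x := dist_triangle _ _ _
            _ < d/2 + d/2 := by
                refine add_lt_add ?_ hz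
                rw [(hiso g).dist_eq, dist_comm]
                exact hu
            _ = d := by ring
        exact absurd hcon (not_lt.2 (hg0 ⟨g, hgne⟩))

/-- A finite subgroup `G` of the orthogonal group `O(n)` all of whose
nonidentity elements have no nonzero fixed vector embeds into the group of surjective
linear isometries of `ℓ² = ℓ²(ℕ; ℝ)` in such a way that nonidentity elements have no
nonzero fixed vector; consequently the induced action of `G` on the unit sphere of `ℓ²`
is free, isometric and properly discontinuous. -/
theorem statement6 (n : ℕ)
    (G : Subgroup (EuclideanSpace ℝ (Fin n) ≃ₗᵢ[ℝ] EuclideanSpace ℝ (Fin n)))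
    (hGfin : Finite G)
    (hfix : ∀ g ∈ G, g ≠ 1 → ∀ v : EuclideanSpace ℝ (Fin n), g v = v → v = 0) :
    ∃ ρ : G →* (lp (fun _ : ℕ => ℝ) 2 ≃ₗᵢ[ℝ] lp (fun _ : ℕ => ℝ) 2),
      Function.Injective ρ ∧
      (∀ g : G, g ≠ 1 → ∀ v : lp (fun _ : ℕ => ℝ) 2, ρ g v = v → v = 0) ∧
      ∃ a : G → Metric.sphere (0 : lp (fun _ : ℕ => ℝ) 2) 1 →
            Metric.sphere (0 : lp (fun _ : ℕ => ℝ) 2) 1,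
        (∀ (g : G) (p : Metric.sphere (0 : lp (fun _ : ℕ => ℝ) 2) 1),
            (a g p : lp (fun _ : ℕ => ℝ) 2) = ρ g (p : lp (fun _ : ℕ => ℝ) 2)) ∧
        (∀ g : G, Isometry (a g)) ∧
        (∀ (g : G) (p), a g p = p → g = 1) ∧
        IsProperlyDiscontinuousAction a := by
  classical
  haveI := hGfin
  haveI : Nonempty G := ⟨1⟩
  by_cases hT : ∀ g : G, g = 1
  · refine ⟨1, ?_, ?_, fun _ p => p, ?_, ?_, ?_, ?_⟩
    · intro a b _
      rw [hT a, hT b]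
    · intro g hg
      exact absurd (hT g) hg
    · intro g p
      simp
    · intro g
      exact isometry_id
    · intro g p _
      exact hT g
    · exact pd_of_isometric _ (fun g => isometry_id)
  · push_neg at hT
    obtain ⟨g₁, hg₁⟩ := hT
    have hn : n ≠ 0 := by
      rintro rfl
      haveI : Subsingleton (EuclideanSpace ℝ (Fin 0)) :=
        ⟨fun a b => PiLp.ext fun i => i.elim0⟩
      exact hg₁ (Subtype.ext (LinearIsometryEquiv.ext fun v => Subsingleton.elim _ _))
    haveI : Nonempty (Fin n) := ⟨⟨0, Nat.pos_of_ne_zero hn⟩⟩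
    haveI := Denumerable.ofEncodableOfInfinite (ℕ × Fin n)
    let e : ℕ ≃ ℕ × Fin n := (Denumerable.eqv (ℕ × Fin n)).symm
    let Φ : lp (fun _ : ℕ => EuclideanSpace ℝ (Fin n)) 2 ≃ₗᵢ[ℝ] lp (fun _ : ℕ => ℝ) 2 :=
      (myBasis n e).repr
    let ρf : G → (lp (fun _ : ℕ => ℝ) 2 ≃ₗᵢ[ℝ] lp (fun _ : ℕ => ℝ) 2) :=
      fun g => (Φ.symm.trans (lpDiag (g : EuclideanSpace ℝ (Fin n) ≃ₗᵢ[ℝ]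
        EuclideanSpace ℝ (Fin n)))).trans Φ
    have hρmul : ∀ g h : G, ρf (g * h) = ρf g * ρf h := by
      intro g h
      apply LinearIsometryEquiv.ext
      intro u
      show Φ (lpDiag _ (Φ.symm u)) = (ρf g) ((ρf h) u)
      show Φ (lpDiag _ (Φ.symm u)) = Φ (lpDiag _ (Φ.symm (Φ (lpDiag _ (Φ.symm u)))))
      rw [Φ.symm_apply_apply]
      congr 1
    let ρ : G →* (lp (fun _ : ℕ => ℝ) 2 ≃ₗᵢ[ℝ] lp (fun _ : ℕ => ℝ) 2) :=
      MonoidHom.mk' ρf hρmul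
    have hconj : ∀ (g : G) (w : lp (fun _ : ℕ => EuclideanSpace ℝ (Fin n)) 2),
        ρ g (Φ w) = Φ (lpDiag (g : EuclideanSpace ℝ (Fin n) ≃ₗᵢ[ℝ]
          EuclideanSpace ℝ (Fin n)) w) := by
      intro g w
      show Φ (lpDiag _ (Φ.symm (Φ w))) = _
      rw [Φ.symm_apply_apply]
    have hfixρ : ∀ g : G, g ≠ 1 → ∀ v : lp (fun _ : ℕ => ℝ) 2, ρ g v = v → v = 0 := by
      intro g hg v hv
      have hgne : (g : EuclideanSpace ℝ (Fin n) ≃ₗᵢ[ℝ] EuclideanSpace ℝ (Fin n)) ≠ 1 :=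
        fun h => hg (Subtype.ext h)
      set w := Φ.symm v with hw
      have hΦw : Φ w = v := Φ.apply_symm_apply v
      have hdiag : Φ (lpDiag (g : EuclideanSpace ℝ (Fin n) ≃ₗᵢ[ℝ]
          EuclideanSpace ℝ (Fin n)) w) = Φ w := by
        rw [← hconj g w, hΦw, hv]
      have hdw := Φ.injective hdiag
      have hzero : ∀ k : ℕ, w k = 0 := by
        intro k
        have hk := congrFun (congrArg
          (fun f : lp (fun _ : ℕ => EuclideanSpace ℝ (Fin n)) 2 =>
            (f : ∀ _ : ℕ, EuclideanSpace ℝ (Fin n))) hdw) k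
        have : (g : EuclideanSpace ℝ (Fin n) ≃ₗᵢ[ℝ] EuclideanSpace ℝ (Fin n)) (w k) = w k := hk
        exact hfix _ g.2 hgne _ this
      have hw0 : w = 0 := by
        apply lp.ext
        funext k
        simpa using hzero k
      rw [← hΦw, hw0, map_zero]
    have hinj : Function.Injective ρ := by
      rw [injective_iff_map_eq_one]
      intro g hg
      by_contra hgne
      have h1 : Φ (lp.single 2 0 (EuclideanSpace.single (⟨0, Nat.pos_of_ne_zero hn⟩ : Fin n) (1:ℝ)))
          = 0 → False := by
        intro h
        have := Φ.injective (by rw [h, map_zero] : Φ _ = Φ 0)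
        have h2 : (lp.single (E := fun _ : ℕ => EuclideanSpace ℝ (Fin n)) (2:ℝ≥0∞) 0
            (EuclideanSpace.single (⟨0, Nat.pos_of_ne_zero hn⟩ : Fin n) (1:ℝ)) :
              ∀ _ : ℕ, EuclideanSpace ℝ (Fin n)) 0 = 0 := by
          rw [this]
          simp
        rw [lp.single_apply_self] at h2
        have h3 : (EuclideanSpace.single (⟨0, Nat.pos_of_ne_zero hn⟩ : Fin n) (1:ℝ))
            ⟨0, Nat.pos_of_ne_zero hn⟩ = 0 := by rw [h2]; rfl
        simp [EuclideanSpace.single_apply] at h3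
      have : ∀ v : lp (fun _ : ℕ => ℝ) 2, ρ g v = v := by
        intro v
        rw [hg]
        rfl
      have hv := hfixρ g hgne (Φ (lp.single 2 0
        (EuclideanSpace.single (⟨0, Nat.pos_of_ne_zero hn⟩ : Fin n) (1:ℝ)))) (this _)
      exact h1 hv
    refine ⟨ρ, hinj, hfixρ, ?_⟩
    have hmem : ∀ (g : G) (p : Metric.sphere (0 : lp (fun _ : ℕ => ℝ) 2) 1),
        ρ g (p : lp (fun _ : ℕ => ℝ) 2) ∈ Metric.sphere (0 : lp (fun _ : ℕ => ℝ) 2) 1 := by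
      intro g p
      rw [mem_sphere_zero_iff_norm, LinearIsometryEquiv.norm_map]
      exact mem_sphere_zero_iff_norm.mp p.2
    refine ⟨fun g p => ⟨ρ g (p : lp (fun _ : ℕ => ℝ) 2), hmem g p⟩, fun g p => rfl, ?_, ?_, ?_⟩
    · intro g
      refine Isometry.of_dist_eq ?_
      intro p q
      rw [Subtype.dist_eq, Subtype.dist_eq]
      exact (ρ g).dist_map _ _
    · intro g p hp
      by_contra hgne
      have : ρ g (p : lp (fun _ : ℕ => ℝ) 2) = (p : lp (fun _ : ℕ => ℝ) 2) :=
        congrArg Subtype.val hp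
      have hp0 := hfixρ g hgne _ this
      have := mem_sphere_zero_iff_norm.mp p.2
      rw [hp0, norm_zero] at this
      exact zero_ne_one this
    · exact pd_of_isometric _ (fun g => Isometry.of_dist_eq (fun p q => by
        rw [Subtype.dist_eq, Subtype.dist_eq]
        exact (ρ g).dist_map _ _))
end

section
/- Suppose a group G admits an injective group homomorphism into the group of surjective linear isometries of ℓ²(ℕ;ℝ) whose induced action on the unit sphere of ℓ²(ℕ;ℝ) is free and properly discontinuous. Then for every infinite set D, G admits an injective group homomorphism into the group of surjective linear isometries of ℓ²(D;ℝ) whose induced action on the unit sphere of ℓ²(D;ℝ) is free and properly discontinuous. -/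
open scoped ENNReal
noncomputable section
namespace S7
set_option linter.unusedVariables false

abbrev Hs (ι : Type*) := lp (fun _ : ι => ℝ) 2

lemma tR : (2 : ℝ≥0∞).toReal = 2 := by norm_num
lemma tRpos : 0 < (2 : ℝ≥0∞).toReal := by norm_num

variable {ι : Type*}

def slice (f : Hs (ι × ℕ)) (i : ι) : Hs ℕ :=
  ⟨fun n => f (i, n), memℓp_gen <|
    ((lp.memℓp f).summable tRpos).comp_injective (fun a b h => congrArg Prod.snd h)⟩

@[simp] lemma slice_apply (f : Hs (ι × ℕ)) (i : ι) (n : ℕ) : slice f i n = f (i, n) := rfl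

lemma hasSum_slice (f : Hs (ι × ℕ)) :
    HasSum (fun i => ‖slice f i‖ ^ (2:ℝ≥0∞).toReal) (‖f‖ ^ (2:ℝ≥0∞).toReal) :=
  (lp.hasSum_norm tRpos f).prod_fiberwise (fun i => lp.hasSum_norm tRpos (slice f i))

lemma norm_eq_of_rpow {a b : ℝ} (ha : 0 ≤ a) (hb : 0 ≤ b)
    (h : a ^ (2:ℝ≥0∞).toReal = b ^ (2:ℝ≥0∞).toReal) : a = b := by
  rw [tR] at h
  exact Real.rpow_left_injOn two_ne_zero ha hb h

lemma norm_le_of_rpow {a b : ℝ} (ha : 0 ≤ a) (hb : 0 ≤ b)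
    (h : a ^ (2:ℝ≥0∞).toReal ≤ b ^ (2:ℝ≥0∞).toReal) : a ≤ b := by
  rw [tR] at h
  by_contra hab
  push_neg at hab
  exact absurd h (not_le.mpr (Real.rpow_lt_rpow hb hab (by norm_num)))

lemma norm_slice_le (f : Hs (ι × ℕ)) (i : ι) : ‖slice f i‖ ≤ ‖f‖ := by
  refine norm_le_of_rpow (norm_nonneg _) (norm_nonneg _) ?_
  exact le_hasSum (hasSum_slice f) i (fun j _ => Real.rpow_nonneg (norm_nonneg _) _)

lemma norm_eq_norm_of_slices {f g : Hs (ι × ℕ)} (h : ∀ i, ‖slice f i‖ = ‖slice g i‖) :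
    ‖f‖ = ‖g‖ := by
  refine norm_eq_of_rpow (norm_nonneg _) (norm_nonneg _) ?_
  have h1 := hasSum_slice f
  simp only [h] at h1
  exact h1.unique (hasSum_slice g)

lemma slice_add (f g : Hs (ι × ℕ)) (i : ι) : slice (f + g) i = slice f i + slice g i := by
  ext n; simp [lp.coeFn_add]

lemma slice_smul (c : ℝ) (f : Hs (ι × ℕ)) (i : ι) : slice (c • f) i = c • slice f i := by
  ext n; simp [lp.coeFn_smul]

lemma slice_sub (f g : Hs (ι × ℕ)) (i : ι) : slice (f - g) i = slice f i - slice g i := by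
  ext n; simp [lp.coeFn_sub]

/-- the diagonal extension of an isometry of `ℓ²(ℕ)` to `ℓ²(ι × ℕ)`, as a bare lp element -/
def extL (T : Hs ℕ ≃ₗᵢ[ℝ] Hs ℕ) (f : Hs (ι × ℕ)) : Hs (ι × ℕ) :=
  ⟨fun p => T (slice f p.1) p.2, by
    apply memℓp_gen
    have hnn : 0 ≤ fun p : ι × ℕ => ‖T (slice f p.1) p.2‖ ^ (2:ℝ≥0∞).toReal :=
      fun p => Real.rpow_nonneg (norm_nonneg _) _
    rw [summable_prod_of_nonneg hnn]
    constructor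
    · intro i
      exact (lp.memℓp (T (slice f i))).summable tRpos
    · have : (fun i : ι => ∑' n, ‖T (slice f i) n‖ ^ (2:ℝ≥0∞).toReal) =
          fun i => ‖slice f i‖ ^ (2:ℝ≥0∞).toReal := by
        funext i
        rw [← lp.norm_rpow_eq_tsum tRpos, T.norm_map]
      rw [this]
      exact (hasSum_slice f).summable⟩

@[simp] lemma extL_apply (T : Hs ℕ ≃ₗᵢ[ℝ] Hs ℕ) (f : Hs (ι × ℕ)) (p : ι × ℕ) :
    extL T f p = T (slice f p.1) p.2 := rfl

lemma slice_extL (T : Hs ℕ ≃ₗᵢ[ℝ] Hs ℕ) (f : Hs (ι × ℕ)) (i : ι) :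
    slice (extL T f) i = T (slice f i) := by
  ext n; rfl

lemma norm_extL (T : Hs ℕ ≃ₗᵢ[ℝ] Hs ℕ) (f : Hs (ι × ℕ)) : ‖extL T f‖ = ‖f‖ :=
  norm_eq_norm_of_slices fun i => by rw [slice_extL, T.norm_map]

/-- the diagonal extension as a linear isometry equivalence -/
def extE (T : Hs ℕ ≃ₗᵢ[ℝ] Hs ℕ) : Hs (ι × ℕ) ≃ₗᵢ[ℝ] Hs (ι × ℕ) where
  toFun := extL T
  invFun := extL T.symm
  map_add' f g := by
    ext p
    simp [slice_add, lp.coeFn_add, map_add]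
  map_smul' c f := by
    ext p
    simp [slice_smul, lp.coeFn_smul, map_smul]
  left_inv f := by
    ext p
    have : slice (extL T f) p.1 = T (slice f p.1) := slice_extL T f p.1
    simp [this]
  right_inv f := by
    ext p
    have : slice (extL T.symm f) p.1 = T.symm (slice f p.1) := slice_extL T.symm f p.1
    simp [this]
  norm_map' := norm_extL T

@[simp] lemma extE_apply (T : Hs ℕ ≃ₗᵢ[ℝ] Hs ℕ) (f : Hs (ι × ℕ)) (p : ι × ℕ) :
    extE T f p = T (slice f p.1) p.2 := rfl

lemma slice_extE (T : Hs ℕ ≃ₗᵢ[ℝ] Hs ℕ) (f : Hs (ι × ℕ)) (i : ι) :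
    slice (extE T f) i = T (slice f i) := slice_extL T f i

lemma extE_mul (T S : Hs ℕ ≃ₗᵢ[ℝ] Hs ℕ) (f : Hs (ι × ℕ)) :
    extE (T * S) f = extE T (extE S f) := by
  ext p
  simp [slice_extE]

/-- congruence of lp along an equiv of index types -/
def lpCongrFun {κ : Type*} (e : ι ≃ κ) (f : Hs ι) : Hs κ :=
  ⟨fun k => f (e.symm k), memℓp_gen <| (e.symm.summable_iff
      (f := fun i => ‖f i‖ ^ (2:ℝ≥0∞).toReal)).mpr ((lp.memℓp f).summable tRpos)⟩

lemma norm_lpCongrFun {κ : Type*} (e : ι ≃ κ) (f : Hs ι) : ‖lpCongrFun e f‖ = ‖f‖ := by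
  refine norm_eq_of_rpow (norm_nonneg _) (norm_nonneg _) ?_
  refine (lp.hasSum_norm tRpos (lpCongrFun e f)).unique ?_
  exact (e.symm.hasSum_iff (f := fun i => ‖f i‖ ^ (2:ℝ≥0∞).toReal)).mpr
    (lp.hasSum_norm tRpos f)

def lpCongr {κ : Type*} (e : ι ≃ κ) : Hs ι ≃ₗᵢ[ℝ] Hs κ where
  toFun := lpCongrFun e
  invFun := lpCongrFun e.symm
  map_add' f g := by ext k; simp [lpCongrFun, lp.coeFn_add]; rfl
  map_smul' c f := by ext k; simp [lpCongrFun, lp.coeFn_smul]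
  left_inv f := by ext i; simp [lpCongrFun]
  right_inv f := by ext k; simp [lpCongrFun]
  norm_map' := norm_lpCongrFun e

end S7

set_option maxHeartbeats 1000000

/-- If a group `G` embeds into the group of surjective linear isometries of
`ℓ²(ℕ; ℝ)` in such a way that the induced action on the unit sphere is free and properly
discontinuous, then for every infinite set `D` the group `G` embeds into the group of
surjective linear isometries of `ℓ²(D; ℝ)` with the induced action on the unit sphere
free and properly discontinuous. -/
theorem statement7 (G : Type*) [Group G]
    (hyp : ∃ ρ : G →* (lp (fun _ : ℕ => ℝ) 2 ≃ₗᵢ[ℝ] lp (fun _ : ℕ => ℝ) 2),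
      Function.Injective ρ ∧
      ∃ a : G → Metric.sphere (0 : lp (fun _ : ℕ => ℝ) 2) 1 →
            Metric.sphere (0 : lp (fun _ : ℕ => ℝ) 2) 1,
        (∀ (g : G) (p : Metric.sphere (0 : lp (fun _ : ℕ => ℝ) 2) 1),
            (a g p : lp (fun _ : ℕ => ℝ) 2) = ρ g (p : lp (fun _ : ℕ => ℝ) 2)) ∧
        (∀ (g : G) (p), a g p = p → g = 1) ∧
        IsProperlyDiscontinuousAction a)
    (D : Type*) [Infinite D] :
    ∃ ρ : G →* (lp (fun _ : D => ℝ) 2 ≃ₗᵢ[ℝ] lp (fun _ : D => ℝ) 2),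
      Function.Injective ρ ∧
      ∃ a : G → Metric.sphere (0 : lp (fun _ : D => ℝ) 2) 1 →
            Metric.sphere (0 : lp (fun _ : D => ℝ) 2) 1,
        (∀ (g : G) (p : Metric.sphere (0 : lp (fun _ : D => ℝ) 2) 1),
            (a g p : lp (fun _ : D => ℝ) 2) = ρ g (p : lp (fun _ : D => ℝ) 2)) ∧
        (∀ (g : G) (p), a g p = p → g = 1) ∧
        IsProperlyDiscontinuousAction a := by
  classical
  obtain ⟨ρ, hρinj, aN, hcomp, hfree, hPD1, hPD2, hPD3⟩ := hyp
  -- separation at a point, from condition (3) of proper discontinuity and freeness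
  have lemA : ∀ u : Metric.sphere (0 : lp (fun _ : ℕ => ℝ) 2) 1, ∃ ε > 0, ∀ g : G, g ≠ 1 →
      ε ≤ ‖ρ g ↑u - (u : lp (fun _ : ℕ => ℝ) 2)‖ := by
    intro u
    obtain ⟨U, hUopen, huU, -, hUdis⟩ := hPD3 u
    obtain ⟨ε, hε, hball⟩ := Metric.isOpen_iff.mp hUopen u huU
    refine ⟨ε, hε, fun g hg => ?_⟩
    by_contra hlt
    push_neg at hlt
    have hne : aN g u ≠ u := fun h => hg (hfree g u h)
    have hmem : aN g u ∈ U := hball (by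
      rw [Metric.mem_ball, Subtype.dist_eq, dist_eq_norm, hcomp]
      exact hlt)
    have hcontra : aN g u ∈ (aN g '' U) ∩ U := ⟨⟨u, huU, rfl⟩, hmem⟩
    rw [hUdis g hne] at hcontra
    exact hcontra
  -- separation of distinct orbits, from condition (1)
  have lemB : ∀ u v : Metric.sphere (0 : lp (fun _ : ℕ => ℝ) 2) 1, (∀ g : G, aN g u ≠ v) →
      ∃ ε > 0, ∀ g : G, ε ≤ ‖ρ g ↑u - (v : lp (fun _ : ℕ => ℝ) 2)‖ := by
    intro u v huv
    obtain ⟨U, V, hUo, hVo, huU, hvV, hdis⟩ := hPD1 u v huv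
    obtain ⟨ε, hε, hball⟩ := Metric.isOpen_iff.mp hVo v hvV
    refine ⟨ε, hε, fun g => ?_⟩
    by_contra hlt
    push_neg at hlt
    have hmem : aN g u ∈ V := hball (by
      rw [Metric.mem_ball, Subtype.dist_eq, dist_eq_norm, hcomp]
      exact hlt)
    have hcontra : aN g u ∈ (aN g '' U) ∩ V := ⟨⟨u, huU, rfl⟩, hmem⟩
    rw [hdis g] at hcontra
    exact hcontra
  -- an equivalence `D ≃ D × ℕ`
  obtain ⟨e⟩ : Nonempty (D ≃ D × ℕ) := by
    apply Cardinal.eq.mp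
    simp [Cardinal.mk_prod, Cardinal.mk_mul_aleph0_eq]
  set Φ : lp (fun _ : D => ℝ) 2 ≃ₗᵢ[ℝ] lp (fun _ : D × ℕ => ℝ) 2 := S7.lpCongr e with hΦ
  -- the representation on `ℓ²(D)`
  set ρD : G →* (lp (fun _ : D => ℝ) 2 ≃ₗᵢ[ℝ] lp (fun _ : D => ℝ) 2) :=
    MonoidHom.mk' (fun g => Φ.trans ((S7.extE (ρ g)).trans Φ.symm)) (by
      intro g h
      apply LinearIsometryEquiv.ext
      intro x
      simp only [LinearIsometryEquiv.coe_mul, Function.comp_apply,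
        LinearIsometryEquiv.trans_apply, LinearIsometryEquiv.apply_symm_apply,
        map_mul, S7.extE_mul]) with hρD
  have hρDapply : ∀ (g : G) (w : lp (fun _ : D => ℝ) 2),
      ρD g w = Φ.symm (S7.extE (ρ g) (Φ w)) := fun g w => rfl
  have hρDnorm : ∀ (g : G) (w : lp (fun _ : D => ℝ) 2), ‖ρD g w‖ = ‖w‖ :=
    fun g w => (ρD g).norm_map w
  -- transport of norms along Φ
  have hnormD : ∀ (g : G) (x y : lp (fun _ : D => ℝ) 2),
      ‖ρD g x - y‖ = ‖S7.extE (ρ g) (Φ x) - Φ y‖ := by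
    intro g x y
    have h1 := Φ.norm_map (Φ.symm (S7.extE (ρ g) (Φ x)) - y)
    rw [map_sub, Φ.apply_symm_apply] at h1
    rw [hρDapply, ← h1]
  -- nonzero slice of a unit vector
  have exSlice : ∀ x : lp (fun _ : D × ℕ => ℝ) 2, ‖x‖ = 1 → ∃ i₀ : D, S7.slice x i₀ ≠ 0 := by
    intro x hx
    by_contra hall
    push_neg at hall
    have hx0 : x = 0 := by
      ext p
      have := congrArg (fun (w : lp (fun _ : ℕ => ℝ) 2) => w p.2) (hall p.1)
      simpa using this
    rw [hx0] at hx
    simp at hx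
  -- key separation lemma, diagonal fixed-point version
  have S1 : ∀ x : lp (fun _ : D × ℕ => ℝ) 2, ‖x‖ = 1 →
      ∃ δ > 0, ∀ g : G, g ≠ 1 → δ ≤ ‖S7.extE (ρ g) x - x‖ := by
    intro x hx
    obtain ⟨i₀, hi₀⟩ := exSlice x hx
    set c := ‖S7.slice x i₀‖ with hcdef
    have hc : 0 < c := norm_pos_iff.mpr hi₀
    set u0 : lp (fun _ : ℕ => ℝ) 2 := c⁻¹ • S7.slice x i₀ with hu0
    have hu0n : ‖u0‖ = 1 := by
      rw [hu0, norm_smul, norm_inv, Real.norm_eq_abs, abs_of_pos hc, ← hcdef,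
        inv_mul_cancel₀ hc.ne']
    have hcu : c • u0 = S7.slice x i₀ := smul_inv_smul₀ hc.ne' _
    obtain ⟨ε, hε, hA⟩ := lemA ⟨u0, mem_sphere_zero_iff_norm.mpr hu0n⟩
    refine ⟨c * ε, mul_pos hc hε, fun g hg => ?_⟩
    have h1 : ‖ρ g (S7.slice x i₀) - S7.slice x i₀‖ ≤ ‖S7.extE (ρ g) x - x‖ := by
      rw [← S7.slice_extE (ρ g) x i₀, ← S7.slice_sub]
      exact S7.norm_slice_le _ i₀
    refine le_trans ?_ h1
    rw [← hcu, map_smul, ← smul_sub, norm_smul, Real.norm_eq_abs, abs_of_pos hc]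
    exact mul_le_mul_of_nonneg_left (hA g hg) hc.le
  -- key separation lemma, two-point version
  have KEY : ∀ x y : lp (fun _ : D × ℕ => ℝ) 2, ‖x‖ = 1 → ‖y‖ = 1 →
      (∀ g : G, S7.extE (ρ g) x ≠ y) →
      ∃ δ > 0, ∀ g : G, δ ≤ ‖S7.extE (ρ g) x - y‖ := by
    intro x y hx hy hne
    obtain ⟨i₀, hi₀⟩ := exSlice x hx
    set c := ‖S7.slice x i₀‖ with hcdef
    have hc : 0 < c := norm_pos_iff.mpr hi₀
    set u0 : lp (fun _ : ℕ => ℝ) 2 := c⁻¹ • S7.slice x i₀ with hu0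
    have hu0n : ‖u0‖ = 1 := by
      rw [hu0, norm_smul, norm_inv, Real.norm_eq_abs, abs_of_pos hc, ← hcdef,
        inv_mul_cancel₀ hc.ne']
    have hcu : c • u0 = S7.slice x i₀ := smul_inv_smul₀ hc.ne' _
    have hbound : ∀ g : G, ‖ρ g (S7.slice x i₀) - S7.slice y i₀‖ ≤ ‖S7.extE (ρ g) x - y‖ := by
      intro g
      rw [← S7.slice_extE (ρ g) x i₀, ← S7.slice_sub]
      exact S7.norm_slice_le _ i₀
    by_cases hcase : ∃ h : G, ρ h (S7.slice x i₀) = S7.slice y i₀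
    · obtain ⟨h, hh⟩ := hcase
      obtain ⟨ε, hε, hA⟩ := lemA ⟨u0, mem_sphere_zero_iff_norm.mpr hu0n⟩
      have hy' : (0:ℝ) < ‖S7.extE (ρ h) x - y‖ := by
        rw [norm_pos_iff, sub_ne_zero]
        exact hne h
      refine ⟨min (c * ε) ‖S7.extE (ρ h) x - y‖, lt_min (mul_pos hc hε) hy', fun g => ?_⟩
      by_cases hgh : g = h
      · rw [hgh]
        exact min_le_right _ _
      · refine le_trans (min_le_left _ _) (le_trans ?_ (hbound g))
        have hmul : ∀ w : lp (fun _ : ℕ => ℝ) 2, ρ h (ρ (h⁻¹ * g) w) = ρ g w := by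
          intro w
          have hmm : ρ h * ρ (h⁻¹ * g) = ρ g := by rw [← map_mul, mul_inv_cancel_left]
          calc ρ h (ρ (h⁻¹ * g) w) = (ρ h * ρ (h⁻¹ * g)) w := rfl
            _ = ρ g w := by rw [hmm]
        have heq : ‖ρ g (S7.slice x i₀) - S7.slice y i₀‖ = c * ‖ρ (h⁻¹ * g) u0 - u0‖ := by
          rw [← hh, ← hmul (S7.slice x i₀), ← map_sub, (ρ h).norm_map, ← hcu, map_smul,
            ← smul_sub, norm_smul, Real.norm_eq_abs, abs_of_pos hc]
        rw [heq]
        have hne1 : h⁻¹ * g ≠ 1 := fun h1 => hgh (by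
          have := inv_mul_eq_one.mp h1
          exact this.symm)
        exact mul_le_mul_of_nonneg_left (hA (h⁻¹ * g) hne1) hc.le
    · push_neg at hcase
      by_cases hnorm : ‖S7.slice y i₀‖ = c
      · set v0 : lp (fun _ : ℕ => ℝ) 2 := c⁻¹ • S7.slice y i₀ with hv0
        have hv0n : ‖v0‖ = 1 := by
          rw [hv0, norm_smul, norm_inv, Real.norm_eq_abs, abs_of_pos hc, hnorm,
            inv_mul_cancel₀ hc.ne']
        have hcv : c • v0 = S7.slice y i₀ := smul_inv_smul₀ hc.ne' _
        have hnev : ∀ g : G, aN g ⟨u0, mem_sphere_zero_iff_norm.mpr hu0n⟩ ≠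
            ⟨v0, mem_sphere_zero_iff_norm.mpr hv0n⟩ := by
          intro g hgv
          apply hcase g
          have hco : ρ g u0 = v0 := by
            have h' := congrArg Subtype.val hgv
            rw [hcomp] at h'
            exact h'
          rw [← hcu, ← hcv, map_smul, hco]
        obtain ⟨ε, hε, hB⟩ := lemB _ _ hnev
        refine ⟨c * ε, mul_pos hc hε, fun g => le_trans ?_ (hbound g)⟩
        rw [← hcu, ← hcv, map_smul, ← smul_sub, norm_smul, Real.norm_eq_abs, abs_of_pos hc]
        exact mul_le_mul_of_nonneg_left (hB g) hc.le
      · refine ⟨|c - ‖S7.slice y i₀‖|,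
          abs_pos.mpr (sub_ne_zero.mpr (fun hh => hnorm hh.symm)),
          fun g => le_trans ?_ (hbound g)⟩
        have hn : ‖ρ g (S7.slice x i₀)‖ = c := (ρ g).norm_map _
        calc |c - ‖S7.slice y i₀‖|
            = |‖ρ g (S7.slice x i₀)‖ - ‖S7.slice y i₀‖| := by rw [hn]
          _ ≤ ‖ρ g (S7.slice x i₀) - S7.slice y i₀‖ := abs_norm_sub_norm_le _ _
  -- transport to the sphere of `ℓ²(D)`
  have ΦnormS : ∀ p : Metric.sphere (0 : lp (fun _ : D => ℝ) 2) 1,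
      ‖Φ (p : lp (fun _ : D => ℝ) 2)‖ = 1 := by
    intro p
    rw [Φ.norm_map]
    exact mem_sphere_zero_iff_norm.mp p.2
  have S1' : ∀ p : Metric.sphere (0 : lp (fun _ : D => ℝ) 2) 1,
      ∃ δ > 0, ∀ g : G, g ≠ 1 → δ ≤ ‖ρD g ↑p - (p : lp (fun _ : D => ℝ) 2)‖ := by
    intro p
    obtain ⟨δ, hδ, hS⟩ := S1 (Φ ↑p) (ΦnormS p)
    exact ⟨δ, hδ, fun g hg => by rw [hnormD]; exact hS g hg⟩
  -- the action on the sphere of `ℓ²(D)`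
  have hmemD : ∀ (g : G) (p : Metric.sphere (0 : lp (fun _ : D => ℝ) 2) 1),
      ρD g ↑p ∈ Metric.sphere (0 : lp (fun _ : D => ℝ) 2) 1 := by
    intro g p
    rw [mem_sphere_zero_iff_norm, hρDnorm]
    exact mem_sphere_zero_iff_norm.mp p.2
  set aD : G → Metric.sphere (0 : lp (fun _ : D => ℝ) 2) 1 →
      Metric.sphere (0 : lp (fun _ : D => ℝ) 2) 1 := fun g p => ⟨ρD g ↑p, hmemD g p⟩ with haD
  have hfreeD : ∀ (g : G) (p : Metric.sphere (0 : lp (fun _ : D => ℝ) 2) 1),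
      aD g p = p → g = 1 := by
    intro g p hfix
    by_contra hg
    obtain ⟨δ, hδ, hS⟩ := S1' p
    have hco : ρD g ↑p = (p : lp (fun _ : D => ℝ) 2) := congrArg Subtype.val hfix
    have := hS g hg
    rw [hco, sub_self, norm_zero] at this
    linarith
  have S2' : ∀ p q : Metric.sphere (0 : lp (fun _ : D => ℝ) 2) 1,
      (∀ g : G, aD g p ≠ q) →
      ∃ δ > 0, ∀ g : G, δ ≤ ‖ρD g ↑p - (q : lp (fun _ : D => ℝ) 2)‖ := by
    intro p q hpq
    have hvec : ∀ g : G, S7.extE (ρ g) (Φ ↑p) ≠ Φ (q : lp (fun _ : D => ℝ) 2) := by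
      intro g hEq
      apply hpq g
      apply Subtype.ext
      show ρD g ↑p = (q : lp (fun _ : D => ℝ) 2)
      rw [hρDapply, hEq, Φ.symm_apply_apply]
    obtain ⟨δ, hδ, hS⟩ := KEY (Φ ↑p) (Φ ↑q) (ΦnormS p) (ΦnormS q) hvec
    exact ⟨δ, hδ, fun g => by rw [hnormD]; exact hS g⟩
  -- injectivity
  obtain ⟨d₀⟩ : Nonempty D := inferInstance
  have hp₀mem : lp.single 2 d₀ (1:ℝ) ∈ Metric.sphere (0 : lp (fun _ : D => ℝ) 2) 1 := by
    rw [mem_sphere_zero_iff_norm]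
    have := lp.norm_single (E := fun _ : D => ℝ) (p := 2) (by norm_num) d₀ (1:ℝ)
    simpa using this
  set p₀ : Metric.sphere (0 : lp (fun _ : D => ℝ) 2) 1 := ⟨lp.single 2 d₀ (1:ℝ), hp₀mem⟩
  have hinjD : Function.Injective ρD := by
    intro g h hEq
    have hfix : aD (h⁻¹ * g) p₀ = p₀ := by
      apply Subtype.ext
      show ρD (h⁻¹ * g) ↑p₀ = (p₀ : lp (fun _ : D => ℝ) 2)
      calc ρD (h⁻¹ * g) ↑p₀ = ρD h⁻¹ (ρD g ↑p₀) := by rw [map_mul]; rfl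
        _ = ρD h⁻¹ (ρD h ↑p₀) := by rw [hEq]
        _ = ρD (h⁻¹ * h) ↑p₀ := by rw [map_mul]; rfl
        _ = (p₀ : lp (fun _ : D => ℝ) 2) := by rw [inv_mul_cancel, map_one]; rfl
    have := hfreeD _ p₀ hfix
    have h2 := inv_mul_eq_one.mp this
    exact h2.symm
  -- assemble
  refine ⟨ρD, hinjD, aD, fun g p => rfl, hfreeD, ?_, ?_, ?_⟩
  · -- condition (1)
    intro p q hpq
    obtain ⟨δ, hδ, hS⟩ := S2' p q hpq
    refine ⟨Metric.ball p (δ/3), Metric.ball q (δ/3), Metric.isOpen_ball, Metric.isOpen_ball,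
      Metric.mem_ball_self (by linarith), Metric.mem_ball_self (by linarith), ?_⟩
    intro g
    rw [Set.eq_empty_iff_forall_notMem]
    rintro r ⟨⟨z, hz, rfl⟩, hrV⟩
    have h1 : ‖ρD g ↑p - ρD g (z : lp (fun _ : D => ℝ) 2)‖ < δ/3 := by
      rw [← map_sub, (ρD g).norm_map, ← dist_eq_norm, ← Subtype.dist_eq, dist_comm]
      exact Metric.mem_ball.mp hz
    have h2 : ‖ρD g ↑z - (q : lp (fun _ : D => ℝ) 2)‖ < δ/3 := by
      have hm := Metric.mem_ball.mp hrV
      rw [Subtype.dist_eq, dist_eq_norm] at hm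
      exact hm
    have h3 := hS g
    have h4 : ‖ρD g ↑p - (q : lp (fun _ : D => ℝ) 2)‖ ≤
        ‖ρD g ↑p - ρD g (z : lp (fun _ : D => ℝ) 2)‖ +
        ‖ρD g ↑z - (q : lp (fun _ : D => ℝ) 2)‖ := by
      rw [← sub_add_sub_cancel (ρD g (p : lp (fun _ : D => ℝ) 2))
        (ρD g (z : lp (fun _ : D => ℝ) 2)) (q : lp (fun _ : D => ℝ) 2)]
      exact norm_add_le _ _
    linarith
  · -- condition (2)
    intro p
    apply Set.Finite.subset (Set.finite_singleton (1:G))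
    intro g hg
    simp only [Set.mem_singleton_iff]
    exact hfreeD g p hg
  · -- condition (3)
    intro p
    obtain ⟨δ, hδ, hS⟩ := S1' p
    refine ⟨Metric.ball p (δ/3), Metric.isOpen_ball, Metric.mem_ball_self (by linarith), ?_, ?_⟩
    · intro g hgfix
      have hg1 : g = 1 := hfreeD g p hgfix
      subst hg1
      rintro r ⟨z, hz, rfl⟩
      have hid : aD 1 z = z := by
        apply Subtype.ext
        show ρD 1 ↑z = (z : lp (fun _ : D => ℝ) 2)
        rw [map_one]; rfl
      rwa [hid]
    · intro g hgne
      have hg1 : g ≠ 1 := by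
        intro h1
        subst h1
        apply hgne
        apply Subtype.ext
        show ρD 1 ↑p = (p : lp (fun _ : D => ℝ) 2)
        rw [map_one]; rfl
      rw [Set.eq_empty_iff_forall_notMem]
      rintro r ⟨⟨z, hz, rfl⟩, hrU⟩
      have h1 : ‖ρD g ↑p - ρD g (z : lp (fun _ : D => ℝ) 2)‖ < δ/3 := by
        rw [← map_sub, (ρD g).norm_map, ← dist_eq_norm, ← Subtype.dist_eq, dist_comm]
        exact Metric.mem_ball.mp hz
      have h2 : ‖ρD g ↑z - (p : lp (fun _ : D => ℝ) 2)‖ < δ/3 := by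
        have hm := Metric.mem_ball.mp hrU
        rw [Subtype.dist_eq, dist_eq_norm] at hm
        exact hm
      have h3 := hS g hg1
      have h4 : ‖ρD g ↑p - (p : lp (fun _ : D => ℝ) 2)‖ ≤
          ‖ρD g ↑p - ρD g (z : lp (fun _ : D => ℝ) 2)‖ +
          ‖ρD g ↑z - (p : lp (fun _ : D => ℝ) 2)‖ := by
        rw [← sub_add_sub_cancel (ρD g (p : lp (fun _ : D => ℝ) 2))
          (ρD g (z : lp (fun _ : D => ℝ) 2)) (p : lp (fun _ : D => ℝ) 2)]
        exact norm_add_le _ _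
      linarith
end
end

section
/- Let V be a real vector space, H a group, and ρ : H → GL(V) an injective group homomorphism such that for every h ≠ e the linear map ρ(h) has no fixed vector other than 0. Then H contains at most one element of order two, and any element of order two in H belongs to the center of H. -/
/-- If a group `H` admits a faithful linear representation on a real vector
space in which every nonidentity element acts without nonzero fixed vectors, then `H`
contains at most one element of order two, and any such element is central. -/
theorem statement9 (V H : Type*) [AddCommGroup V] [Module ℝ V] [Group H]
    (ρ : H →* (V ≃ₗ[ℝ] V)) (hinj : Function.Injective ρ)
    (hfix : ∀ h : H, h ≠ 1 → ∀ v : V, ρ h v = v → v = 0) :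
    (∀ a b : H, orderOf a = 2 → orderOf b = 2 → a = b) ∧
    (∀ a : H, orderOf a = 2 → ∀ b : H, a * b = b * a) := by
  have key : ∀ a : H, orderOf a = 2 → ∀ v : V, ρ a v = -v := by
    intro a ha v
    have hane : a ≠ 1 := by
      intro h; rw [h, orderOf_one] at ha; norm_num at ha
    have hsq : a * a = 1 := by
      have := pow_orderOf_eq_one a
      rwa [ha, pow_two] at this
    have hfixv : ρ a (v + ρ a v) = v + ρ a v := by
      have : ρ a (ρ a v) = v := by
        have : ρ (a * a) v = ρ 1 v := by rw [hsq]
        simpa [map_mul, MonoidHom.map_one] using this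
      simp [map_add, this, add_comm]
    exact eq_neg_of_add_eq_zero_right (hfix a hane _ hfixv)
  constructor
  · intro a b ha hb
    apply hinj
    ext v
    rw [key a ha v, key b hb v]
  · intro a ha b
    apply hinj
    ext v
    simp only [map_mul]
    change ρ a (ρ b v) = ρ b (ρ a v)
    rw [key a ha (ρ b v), key a ha v, map_neg]
end

section
/- Let H be a complex Hilbert space and T : H → H a continuous linear map of finite order m, i.e. T^m = id and T^k ≠ id for 1 ≤ k < m. Then the maps T, T², …, T^{m−1} all have no fixed point other than 0 if and only if Φ_m(T) = 0, where Φ_m is the m-th cyclotomic polynomial. -/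
open Polynomial

/-- Applying `aeval T (p * q)` to a vector is applying `aeval T p` after `aeval T q`. -/
private lemma aeval_mul_apply {H : Type*} [NormedAddCommGroup H] [InnerProductSpace ℂ H]
    (T : H →L[ℂ] H) (p q : ℂ[X]) (x : H) :
    (aeval T (p * q)) x = (aeval T p) ((aeval T q) x) := by
  rw [map_mul]; rfl

/-- Let `T` be a continuous linear map of finite order `m` on a complex
Hilbert space (`T ^ m = 1` and `T ^ k ≠ 1` for `1 ≤ k < m`). Then `T, T², …, T^(m-1)`
all have no fixed point other than `0` if and only if `Φ_m(T) = 0`, where `Φ_m` is the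
`m`-th cyclotomic polynomial. -/
theorem statement11 (H : Type*) [NormedAddCommGroup H] [InnerProductSpace ℂ H]
    [CompleteSpace H] (T : H →L[ℂ] H) (m : ℕ) (hm : 0 < m) (hTm : T ^ m = 1)
    (hord : ∀ k : ℕ, 1 ≤ k → k < m → T ^ k ≠ 1) :
    (∀ k : ℕ, 1 ≤ k → k < m → ∀ x : H, (T ^ k) x = x → x = 0) ↔
      Polynomial.aeval T (Polynomial.cyclotomic m ℂ) = 0 := by
  have haevalpow : ∀ (n : ℕ) (z : H), (aeval T ((X : ℂ[X]) ^ n - 1)) z = (T ^ n) z - z := by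
    intro n z
    rw [map_sub, map_one, aeval_X_pow]
    rfl
  constructor
  · intro hfix
    -- key inductive step over sets of proper divisors
    have key : ∀ s : Finset ℕ, (∀ d ∈ s, d ∈ m.properDivisors) → ∀ z : H,
        (aeval T (∏ d ∈ s, cyclotomic d ℂ)) z = 0 → z = 0 := by
      intro s
      induction s using Finset.induction_on with
      | empty => intro _ z hz; simpa using hz
      | @insert a s ha ih =>
        intro hs z hz
        rw [Finset.prod_insert ha] at hz
        set w := (aeval T (∏ d ∈ s, cyclotomic d ℂ)) z with hw
        rw [aeval_mul_apply] at hz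
        -- hz : aeval T (cyclotomic a ℂ) w = 0
        have hamem := hs a (Finset.mem_insert_self a s)
        obtain ⟨hdvd, hlt⟩ := Nat.mem_properDivisors.mp hamem
        have hapos : 0 < a := Nat.pos_of_dvd_of_pos hdvd hm
        obtain ⟨r, hr⟩ := cyclotomic.dvd_X_pow_sub_one a ℂ
        have hfw : (T ^ a) w = w := by
          have : (aeval T ((X : ℂ[X]) ^ a - 1)) w = 0 := by
            rw [hr, mul_comm, aeval_mul_apply, hz, map_zero]
          rw [haevalpow a w] at this
          exact sub_eq_zero.mp this
        have hw0 : w = 0 := hfix a hapos hlt w hfw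
        exact ih (fun d hd => hs d (Finset.mem_insert_of_mem hd)) z hw0
    ext x
    have h1 : (aeval T (∏ d ∈ m.divisors, cyclotomic d ℂ)) x = 0 := by
      rw [prod_cyclotomic_eq_X_pow_sub_one hm, haevalpow, hTm]
      simp
    rw [← Nat.cons_self_properDivisors hm.ne', Finset.prod_cons, mul_comm,
      aeval_mul_apply] at h1
    simpa using key m.properDivisors (fun d hd => hd) _ h1
  · intro hphi k hk1 hkm x hx
    have hkpos : 0 < k := hk1
    have hcopQ : IsCoprime (cyclotomic m ℚ) ((X : ℚ[X]) ^ k - 1) := by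
      rw [← prod_cyclotomic_eq_X_pow_sub_one hkpos ℚ]
      refine IsCoprime.prod_right fun d hd => cyclotomic.isCoprime_rat ?_
      have : d ≤ k := Nat.divisor_le hd
      omega
    have hcop : IsCoprime (cyclotomic m ℂ) ((X : ℂ[X]) ^ k - 1) := by
      have := hcopQ.map (Polynomial.mapRingHom (algebraMap ℚ ℂ))
      simpa [Polynomial.coe_mapRingHom, Polynomial.map_cyclotomic] using this
    obtain ⟨a, b, hab⟩ := hcop
    have hx' : (aeval T ((X : ℂ[X]) ^ k - 1)) x = 0 := by
      rw [haevalpow, hx, sub_self]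
    calc x = (aeval T (1 : ℂ[X])) x := by simp
    _ = (aeval T (a * cyclotomic m ℂ + b * ((X : ℂ[X]) ^ k - 1))) x := by rw [hab]
    _ = (aeval T a) ((aeval T (cyclotomic m ℂ)) x)
          + (aeval T b) ((aeval T ((X : ℂ[X]) ^ k - 1)) x) := by
        rw [map_add]; rw [ContinuousLinearMap.add_apply, aeval_mul_apply, aeval_mul_apply]
    _ = 0 := by rw [hphi, hx']; simp
end

section
/- Let p be a prime and V a nontrivial complex vector space. Then there is no injective group homomorphism ρ : (ℤ/pℤ) × (ℤ/pℤ) → GL(V) such that for every nonidentity element a the linear map ρ(a) has no fixed vector other than 0. -/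
/-- For a prime `p` and a nontrivial complex vector space `V`, there is no
injective group homomorphism `(ℤ/pℤ) × (ℤ/pℤ) → GL(V)` such that every nonidentity
element acts without nonzero fixed vectors. -/
theorem statement12 (p : ℕ) (hp : p.Prime) (V : Type*) [AddCommGroup V] [Module ℂ V]
    (hV : ∃ v : V, v ≠ 0) :
    ¬ ∃ ρ : Multiplicative (ZMod p × ZMod p) →* (V ≃ₗ[ℂ] V),
        Function.Injective ρ ∧
        ∀ a : Multiplicative (ZMod p × ZMod p), a ≠ 1 → ∀ v : V, ρ a v = v → v = 0 := by
  haveI : Fact p.Prime := ⟨hp⟩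
  rintro ⟨ρ, -, hfree⟩
  obtain ⟨v, hv⟩ := hV
  set G := Multiplicative (ZMod p × ZMod p) with hG
  -- every element has order dividing p
  have hap : ∀ a : G, a ^ p = 1 := by
    intro a
    have h0 : p • Multiplicative.toAdd a = 0 := by
      rw [Prod.ext_iff]
      constructor <;> simp [Prod.smul_fst, Prod.smul_snd, nsmul_eq_mul, ZMod.natCast_self]
    calc a ^ p = Multiplicative.ofAdd (p • Multiplicative.toAdd a) := by
          rw [ofAdd_nsmul]; rfl
      _ = 1 := by rw [h0]; rfl
  -- a nonidentity element
  have hg1 : (Multiplicative.ofAdd (((1 : ZMod p), (0 : ZMod p)))  : G) ≠ 1 := by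
    intro h
    have : ((1 : ZMod p), (0 : ZMod p)) = (0 : ZMod p × ZMod p) := by
      simpa using congrArg Multiplicative.toAdd h
    exact one_ne_zero (congrArg Prod.fst this)
  -- mul in the automorphism group
  have hmul : ∀ (a b : G) (w : V), ρ (a * b) w = ρ a (ρ b w) := by
    intro a b w
    rw [map_mul]
    rfl
  -- Claim A : the full group sum kills everything
  have claimA : ∀ w : V, ∑ a : G, ρ a w = 0 := by
    intro w
    apply hfree _ hg1
    rw [map_sum]
    refine Fintype.sum_bijective (fun a => Multiplicative.ofAdd (((1 : ZMod p), (0 : ZMod p))) * a)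
      (Group.mulLeft_bijective _) _ _ ?_
    intro a
    rw [hmul]
  -- Claim B : cyclic sums at nonidentity elements kill everything
  have claimB : ∀ a : G, a ≠ 1 → ∀ w : V, ∑ i ∈ Finset.range p, ρ (a ^ i) w = 0 := by
    intro a ha w
    apply hfree a ha
    rw [map_sum]
    have step : ∀ i, ρ a (ρ (a ^ i) w) = ρ (a ^ (i + 1)) w := by
      intro i
      rw [pow_succ', hmul]
    simp_rw [step]
    have h1 := Finset.sum_range_succ' (fun i => ρ (a ^ i) w) p
    have h2 := Finset.sum_range_succ (fun i => ρ (a ^ i) w) p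
    have hfp : ρ (a ^ p) w = ρ (a ^ 0) w := by rw [hap, pow_zero]
    have := h1.symm.trans h2
    rw [hfp] at this
    simpa using this
  -- cardinality
  have hcard : Nat.card G = p ^ 2 := by
    simp [hG, Nat.card_eq_fintype_card, ZMod.card, sq]
  -- double counting
  have hT1 : ∑ a : G, ∑ i ∈ Finset.range p, ρ (a ^ i) v = p • v := by
    rw [Finset.sum_eq_single_of_mem 1 (Finset.mem_univ _)
      (fun a _ ha => claimB a ha v)]
    simp [Finset.sum_const]
  have hT2 : ∑ a : G, ∑ i ∈ Finset.range p, ρ (a ^ i) v = (p ^ 2) • v := by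
    rw [Finset.sum_comm]
    rw [Finset.sum_eq_single_of_mem 0 (Finset.mem_range.mpr hp.pos)]
    · simp only [pow_zero, map_one]
      rw [Finset.sum_const, Finset.card_univ, ← Nat.card_eq_fintype_card, hcard]
      simp
    · intro i hi hi0
      have hicop : (Nat.card G).Coprime i := by
        rw [hcard]
        have : ¬ p ∣ i := fun h =>
          absurd (Nat.le_of_dvd (Nat.pos_of_ne_zero hi0) h)
            (by have := Finset.mem_range.mp hi; omega)
        exact (Nat.Prime.coprime_iff_not_dvd hp).mpr this |>.pow_left 2
      have hbij : Function.Bijective (fun a : G => a ^ i) :=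
        (powCoprime hicop).bijective
      rw [Fintype.sum_bijective _ hbij _ (fun a => ρ a v) (fun a => rfl)]
      exact claimA v
  have heq : (p : ℕ) • v = (p ^ 2 : ℕ) • v := hT1 ▸ hT2
  have heqC : (p : ℂ) • v = ((p : ℂ) ^ 2) • v := by
    rw [Nat.cast_smul_eq_nsmul, ← Nat.cast_pow, Nat.cast_smul_eq_nsmul]
    exact heq
  have hsub : ((p : ℂ) ^ 2 - (p : ℂ)) • v = 0 := by
    rw [sub_smul, ← heqC, sub_self]
  have hne : ((p : ℂ) ^ 2 - (p : ℂ)) ≠ 0 := by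
    have h2 := hp.two_le
    have : ((p : ℂ) ^ 2 - (p : ℂ)) = ((p * p - p : ℕ) : ℂ) := by
      push_cast [Nat.sub_mul, Nat.cast_sub (Nat.le_mul_of_pos_left p hp.pos)]
      ring
    rw [this]
    exact_mod_cast Nat.sub_ne_zero_of_lt (by nlinarith : p < p * p)
  exact hv ((smul_eq_zero.mp hsub).resolve_left hne)
end

section
/- Let n, m be positive integers with gcd(n, m) > 1 and let V be a nontrivial complex vector space. Then there is no injective group homomorphism ρ : (ℤ/nℤ) × (ℤ/mℤ) → GL(V) such that for every nonidentity element a the linear map ρ(a) has no fixed vector other than 0. In other words, any group containing a subgroup isomorphic to ℤ/nℤ ⊕ ℤ/mℤ with gcd(n,m) ≠ 1 cannot act faithfully and linearly on V without nonzero fixed points. -/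
/-- For positive integers `n, m` with `gcd(n, m) > 1` and a nontrivial
complex vector space `V`, there is no injective group homomorphism
`(ℤ/nℤ) × (ℤ/mℤ) → GL(V)` such that every nonidentity element acts without nonzero
fixed vectors. -/
theorem statement13 (n m : ℕ) (hn : 0 < n) (hm : 0 < m) (hgcd : 1 < Nat.gcd n m)
    (V : Type*) [AddCommGroup V] [Module ℂ V] (hV : ∃ v : V, v ≠ 0) :
    ¬ ∃ ρ : Multiplicative (ZMod n × ZMod m) →* (V ≃ₗ[ℂ] V),
        Function.Injective ρ ∧
        ∀ a : Multiplicative (ZMod n × ZMod m), a ≠ 1 → ∀ v : V, ρ a v = v → v = 0 := by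
  rintro ⟨ρ, -, hfpf⟩
  obtain ⟨v, hv⟩ := hV
  obtain ⟨p, hp, hpdvd⟩ := Nat.exists_prime_and_dvd (n := Nat.gcd n m) (by omega)
  have hpn : p ∣ n := hpdvd.trans (Nat.gcd_dvd_left n m)
  have hpm : p ∣ m := hpdvd.trans (Nat.gcd_dvd_right n m)
  have hp0 : 0 < p := hp.pos
  set G := Multiplicative (ZMod n × ZMod m) with hG
  let x : ZMod n := ((n / p : ℕ) : ZMod n)
  let y : ZMod m := ((m / p : ℕ) : ZMod m)
  -- x ≠ 0
  have hxne : x ≠ 0 := by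
    intro h
    rw [ZMod.natCast_eq_zero_iff] at h
    have h1 : 0 < n / p := Nat.div_pos (Nat.le_of_dvd hn hpn) hp0
    have h2 : n / p < n := Nat.div_lt_self hn hp.one_lt
    exact absurd (Nat.le_of_dvd h1 h) (by omega)
  -- i • y ≠ 0 for 0 < i < p
  have hyne : ∀ i : ℕ, 0 < i → i < p → i • y ≠ 0 := by
    intro i hi1 hi2 h
    have : i • y = ((i * (m / p) : ℕ) : ZMod m) := by
      push_cast
      rw [nsmul_eq_mul]
    rw [this, ZMod.natCast_eq_zero_iff] at h
    have hmp : 0 < m / p := Nat.div_pos (Nat.le_of_dvd hm hpm) hp0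
    have hlt : i * (m / p) < m := by
      calc i * (m / p) < p * (m / p) := (Nat.mul_lt_mul_right hmp).2 hi2
        _ = m := Nat.mul_div_cancel' hpm
    have hpos : 0 < i * (m / p) := Nat.mul_pos hi1 hmp
    exact absurd (Nat.le_of_dvd hpos h) (by omega)
  have hpx : p • x = 0 := by
    show ((p : ℕ) • (((n / p : ℕ) : ZMod n))) = 0
    rw [nsmul_eq_mul, ← Nat.cast_mul, Nat.mul_div_cancel' hpn, ZMod.natCast_self]
  have hpy : p • y = 0 := by
    show ((p : ℕ) • (((m / p : ℕ) : ZMod m))) = 0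
    rw [nsmul_eq_mul, ← Nat.cast_mul, Nat.mul_div_cancel' hpm, ZMod.natCast_self]
  let a : G := Multiplicative.ofAdd (x, 0)
  let b : G := Multiplicative.ofAdd (0, y)
  have hap : a ^ p = 1 := by
    have : (a ^ p).toAdd = (0 : ZMod n × ZMod m) := by
      rw [toAdd_pow]
      show p • ((x, 0) : ZMod n × ZMod m) = 0
      rw [Prod.smul_def, Prod.mk_eq_zero]
      exact ⟨hpx, smul_zero p⟩
    simpa using congrArg Multiplicative.ofAdd this
  have hbp : b ^ p = 1 := by
    have : (b ^ p).toAdd = (0 : ZMod n × ZMod m) := by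
      rw [toAdd_pow]
      show p • ((0, y) : ZMod n × ZMod m) = 0
      rw [Prod.smul_def, Prod.mk_eq_zero]
      exact ⟨smul_zero p, hpy⟩
    simpa using congrArg Multiplicative.ofAdd this
  -- key lemma
  have key : ∀ g : G, g ≠ 1 → g ^ p = 1 → ∀ w : V,
      ∑ i ∈ Finset.range p, (ρ g ^ i) w = 0 := by
    intro g hg hgp w
    apply hfpf g hg
    have hpow : (ρ g) ^ p = 1 := by rw [← map_pow, hgp, map_one]
    rw [map_sum]
    have step : ∀ i : ℕ, (ρ g) ((ρ g ^ i) w) = (ρ g ^ (i + 1)) w := by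
      intro i
      rw [pow_succ']
      rfl
    calc ∑ i ∈ Finset.range p, (ρ g) ((ρ g ^ i) w)
        = ∑ i ∈ Finset.range p, (ρ g ^ (i + 1)) w := by
          exact Finset.sum_congr rfl fun i _ => step i
      _ = ∑ i ∈ Finset.range (p + 1), (ρ g ^ i) w - (ρ g ^ 0) w := by
          rw [Finset.sum_range_succ']; abel
      _ = ∑ i ∈ Finset.range p, (ρ g ^ i) w + (ρ g ^ p) w - (ρ g ^ 0) w := by
          rw [Finset.sum_range_succ]
      _ = ∑ i ∈ Finset.range p, (ρ g ^ i) w := by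
          rw [hpow, pow_zero]; abel
  -- a * b ^ k ≠ 1
  have hab : ∀ k : ℕ, a * b ^ k ≠ 1 := by
    intro k h
    have := congrArg Multiplicative.toAdd h
    rw [toAdd_mul, toAdd_pow, toAdd_one] at this
    have : ((x, 0) : ZMod n × ZMod m) + k • ((0, y) : ZMod n × ZMod m) = 0 := this
    rw [Prod.smul_def, Prod.mk_add_mk, Prod.mk_eq_zero] at this
    exact hxne (by simpa using this.1)
  have habp : ∀ k : ℕ, (a * b ^ k) ^ p = 1 := by
    intro k
    rw [mul_pow, hap, ← pow_mul, mul_comm k p, pow_mul, hbp, one_pow, one_mul]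
  -- b ^ i ≠ 1 for 0 < i < p
  have hbi : ∀ i : ℕ, 0 < i → i < p → b ^ i ≠ 1 := by
    intro i hi1 hi2 h
    have := congrArg Multiplicative.toAdd h
    rw [toAdd_pow, toAdd_one] at this
    have : i • ((0, y) : ZMod n × ZMod m) = 0 := this
    rw [Prod.smul_def, Prod.mk_eq_zero] at this
    exact hyne i hi1 hi2 this.2
  -- the double sum
  have hsum : ∑ k ∈ Finset.range p, ∑ i ∈ Finset.range p,
      (ρ (a ^ i * b ^ (i * k))) v = 0 := by
    apply Finset.sum_eq_zero
    intro k _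
    have hk := key (a * b ^ k) (hab k) (habp k) v
    rw [← hk]
    apply Finset.sum_congr rfl
    intro i _
    rw [← map_pow ρ]
    congr 2
    rw [mul_pow, ← pow_mul, mul_comm k i]
  rw [Finset.sum_comm] at hsum
  have h0 : ∑ i ∈ Finset.range p, ∑ k ∈ Finset.range p,
      (ρ (a ^ i * b ^ (i * k))) v = p • v := by
    rw [Finset.sum_eq_single_of_mem 0 (Finset.mem_range.2 hp0)]
    · simp
    · intro i hi hi0
      have hiR := Finset.mem_range.1 hi
      have hi1 : 0 < i := Nat.pos_of_ne_zero hi0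
      have hbine : b ^ i ≠ 1 := hbi i hi1 hiR
      have hbip : (b ^ i) ^ p = 1 := by
        rw [← pow_mul, mul_comm i p, pow_mul, hbp, one_pow]
      have hk := key (b ^ i) hbine hbip v
      calc ∑ k ∈ Finset.range p, (ρ (a ^ i * b ^ (i * k))) v
          = ∑ k ∈ Finset.range p, (ρ (a ^ i)) ((ρ (b ^ i) ^ k) v) := by
            apply Finset.sum_congr rfl
            intro k _
            rw [show b ^ (i * k) = (b ^ i) ^ k from pow_mul b i k, map_mul,
              map_pow ρ (b ^ i) k]
            rfl
        _ = (ρ (a ^ i)) (∑ k ∈ Finset.range p, (ρ (b ^ i) ^ k) v) := by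
            rw [map_sum]
        _ = 0 := by rw [hk, map_zero]
  rw [h0] at hsum
  have : ((p : ℂ)) • v = 0 := by rw [Nat.cast_smul_eq_nsmul]; exact hsum
  rcases smul_eq_zero.1 this with h | h
  · exact absurd h (by exact_mod_cast hp0.ne')
  · exact hv h
end
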